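/- For every α > 0 there exists a constant C > 0 such that for every ε ∈ (0,1] and every t ∈ ℝ one has f_{1/2}(t) + (4α/π²)·ε·f₁(t) ≥ min{ ½·|exp(2πιt) − 1|² , 2αε } − C·ε^{3/2}·f₁(t), where exp is the complex exponential, ι the imaginary unit and |·| the complex modulus. -/

import Mathlib

/-- The distance of a real number to the set of integers. -/
noncomputable def distZ (t : ℝ) : ℝ := ⨅ n : ℤ, |t - n|

/-- The distance of a real number to the set of half-integers `(1/2)ℤ`. -/
noncomputable def distHalfZ (t : ℝ) : ℝ := ⨅ n : ℤ, |t - n / 2|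

/-- The interaction potential `f₁(t) = 2π²·dist(t,ℤ)²`. -/
noncomputable def f1 (t : ℝ) : ℝ := 2 * Real.pi ^ 2 * distZ t ^ 2

/-- The interaction potential `f_{1/2}(t) = 2π²·dist(t,(1/2)ℤ)²`. -/
noncomputable def fHalf (t : ℝ) : ℝ := 2 * Real.pi ^ 2 * distHalfZ t ^ 2

lemma bdd (t : ℝ) : BddBelow (Set.range fun n : ℤ => |t - n|) :=
  ⟨0, by rintro x ⟨n, rfl⟩; positivity⟩

lemma distZ_eq (t : ℝ) : distZ t = |t - round t| := by
  refine le_antisymm (ciInf_le (bdd t) (round t)) (le_ciInf fun n => ?_)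
  rcases eq_or_ne n (round t) with rfl | h
  · rfl
  · have h1 : (1 : ℝ) ≤ |(round t : ℝ) - n| := by
      have : (1:ℤ) ≤ |round t - n| := Int.one_le_abs (sub_ne_zero.2 (Ne.symm h))
      calc (1:ℝ) = ((1:ℤ):ℝ) := by norm_num
        _ ≤ ((|round t - n| : ℤ) : ℝ) := by exact_mod_cast this
        _ = |(round t : ℝ) - n| := by push_cast [Int.cast_abs]; ring_nf
    have h2 : |t - round t| ≤ 1/2 := abs_sub_round t
    have h3 : |(round t : ℝ) - n| ≤ |t - round t| + |t - n| := by
      have := abs_sub_abs_le_abs_sub ((round t : ℝ) - n) 0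
      calc |(round t : ℝ) - n| = |(round t - t) + (t - n)| := by ring_nf
        _ ≤ |(round t : ℝ) - t| + |t - n| := abs_add_le _ _
        _ = |t - round t| + |t - n| := by rw [abs_sub_comm]
    linarith

lemma distZ_nonneg (t : ℝ) : 0 ≤ distZ t := le_ciInf fun n => abs_nonneg _

lemma distZ_le_half (t : ℝ) : distZ t ≤ 1/2 := by
  rw [distZ_eq]; exact abs_sub_round t

lemma distZ_le (t : ℝ) (n : ℤ) : distZ t ≤ |t - n| := ciInf_le (bdd t) n

lemma sin_le_pi_distZ (t : ℝ) : |Real.sin (Real.pi * t)| ≤ Real.pi * distZ t := by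
  rw [distZ_eq]
  set n := round t with hn
  have key : |Real.sin (Real.pi * (t - n))| = |Real.sin (Real.pi * t)| := by
    have h1 : Real.pi * (t - n) = -(n * Real.pi - Real.pi * t) := by ring
    rw [h1, Real.sin_neg, Real.sin_int_mul_pi_sub, neg_neg, abs_mul]
    have : |((-1:ℝ)) ^ n| = 1 := by
      rcases Int.even_or_odd n with he | ho
      · rw [he.neg_one_zpow]; simp
      · rw [ho.neg_one_zpow]; simp
    rw [this, one_mul]
  calc |Real.sin (Real.pi * t)| = |Real.sin (Real.pi * (t - n))| := key.symm
    _ ≤ |Real.pi * (t - n)| := Real.abs_sin_le_abs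
    _ = Real.pi * |t - n| := by rw [abs_mul, abs_of_pos Real.pi_pos]

lemma distHalfZ_ge (t : ℝ) : min (distZ t) (1/2 - distZ t) ≤ distHalfZ t := by
  refine le_ciInf fun n => ?_
  rcases Int.even_or_odd n with ⟨m, rfl⟩ | ⟨m, rfl⟩
  · have : |t - (m + m : ℤ) / 2| = |t - m| := by push_cast; ring_nf
    rw [this]
    exact le_trans (min_le_left _ _) (distZ_le t m)
  · refine le_trans (min_le_right _ _) ?_
    have hj : (1:ℝ)/2 ≤ |(round t : ℝ) - (2*m+1 : ℤ)/2| := by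
      have := round t
      push_cast
      rcases le_or_gt ((round t : ℝ)) m with h | h
      · rw [abs_sub_comm, abs_of_pos (by linarith)]; linarith
      · have : (m:ℝ) + 1 ≤ round t := by exact_mod_cast h
        rw [abs_of_pos (by linarith)]; linarith
    have htri : |(round t : ℝ) - (2*m+1 : ℤ)/2| ≤ |t - round t| + |t - (2*m+1 : ℤ)/2| := by
      calc |(round t : ℝ) - (2*m+1 : ℤ)/2| = |(round t - t) + (t - (2*m+1 : ℤ)/2)| := by ring_nf
        _ ≤ |(round t : ℝ) - t| + |t - (2*m+1 : ℤ)/2| := abs_add_le _ _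
        _ = |t - round t| + |t - (2*m+1 : ℤ)/2| := by rw [abs_sub_comm]
    rw [distZ_eq]
    linarith

lemma abs_exp_sq (t : ℝ) :
    ‖Complex.exp (2 * Real.pi * Complex.I * (t : ℂ)) - 1‖ ^ 2
      = 4 * Real.sin (Real.pi * t) ^ 2 := by
  set θ := 2 * Real.pi * t with hθ
  have h : 2 * (Real.pi:ℂ) * Complex.I * (t:ℂ) = ((θ : ℝ) : ℂ) * Complex.I := by
    rw [hθ]; push_cast; ring
  rw [h, Complex.sq_norm, Complex.exp_mul_I, ← Complex.ofReal_cos, ← Complex.ofReal_sin]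
  have hre : (↑(Real.cos θ) + ↑(Real.sin θ) * Complex.I - 1 : ℂ)
      = ↑(Real.cos θ - 1) + ↑(Real.sin θ) * Complex.I := by push_cast; ring
  rw [hre, Complex.normSq_add_mul_I]
  have hc : Real.cos θ = 1 - 2 * Real.sin (Real.pi * t) ^ 2 := by
    have h2 : θ = 2 * (Real.pi * t) := by rw [hθ]; ring
    rw [h2, Real.cos_two_mul']
    nlinarith [Real.sin_sq_add_cos_sq (Real.pi * t)]
  have hs := Real.sin_sq_add_cos_sq θ
  nlinarith


set_option maxHeartbeats 1600000 in
lemma auxkey (α ε d h' E M : ℝ) (hα : 0 < α) (hε0 : 0 < ε) (hε1 : ε ≤ 1)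
    (hd0 : 0 ≤ d) (hd2 : d ≤ 1/2) (hh0 : 0 ≤ h') (hE0 : 0 ≤ E) (hEe : ε ^ 2 ≤ E)
    (hmin : min d (1/2 - d) ≤ h') (hM1 : M ≤ 2 * α * ε) (hM2 : M ≤ 2 * Real.pi ^ 2 * d ^ 2) :
    M - (α ^ 2 + 1) * E * (2 * Real.pi ^ 2 * d ^ 2) ≤ 2 * Real.pi ^ 2 * h' ^ 2 + 8 * α * ε * d ^ 2 := by
  have hπ := Real.pi_pos
  have hπ3 := Real.pi_gt_three
  have hπ2 : (9:ℝ) ≤ Real.pi ^ 2 := by nlinarith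
  have hπ4 : (81:ℝ) ≤ Real.pi ^ 4 := by nlinarith
  rcases le_or_gt d (1/4) with hd | hd
  · have hdh : d ≤ h' := le_trans (le_of_eq (min_eq_left (by linarith)).symm) hmin
    have hh2 : d ^ 2 ≤ h' ^ 2 := by nlinarith
    have hmono : 2 * Real.pi ^ 2 * d ^ 2 ≤ 2 * Real.pi ^ 2 * h' ^ 2 := by nlinarith
    have nn1 : 0 ≤ 8 * α * ε * d ^ 2 := by positivity
    have nn2 : 0 ≤ (α ^ 2 + 1) * E * (2 * Real.pi ^ 2 * d ^ 2) := by positivity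
    linarith
  · have hsh : 1/2 - d ≤ h' := le_trans (le_of_eq (min_eq_right (by linarith)).symm) hmin
    have hh2 : (1/2 - d) ^ 2 ≤ h' ^ 2 := by nlinarith
    have h1 : 2 * Real.pi ^ 4 * (1/2 - d) ^ 2 ≤ 2 * Real.pi ^ 4 * h' ^ 2 := by nlinarith
    have hsq : 0 ≤ (Real.pi ^ 2 * (1/2 - d) - 2 * α * ε) ^ 2 := sq_nonneg _
    have htriv : 0 ≤ 8 * Real.pi ^ 2 * α * ε * (1/2 - d) ^ 2 := by positivity
    have hd16 : (1:ℝ)/16 ≤ d ^ 2 := by nlinarith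
    have e1 : α ^ 2 * ε ^ 2 ≤ (α ^ 2 + 1) * E := by
      have h1 : α ^ 2 * ε ^ 2 ≤ α ^ 2 * E := mul_le_mul_of_nonneg_left hEe (sq_nonneg α)
      linarith
    have nn : (0:ℝ) ≤ (α ^ 2 + 1) * E := by positivity
    have big : (8:ℝ) ≤ 2 * Real.pi ^ 4 * d ^ 2 := by nlinarith
    have hlast : 8 * α ^ 2 * ε ^ 2 ≤ 2 * (α ^ 2 + 1) * E * Real.pi ^ 4 * d ^ 2 := by
      nlinarith [mul_le_mul_of_nonneg_left big nn]
    have key : 0 ≤ Real.pi ^ 2 * (2 * Real.pi ^ 2 * h' ^ 2 + 8 * α * ε * d ^ 2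
        + (α ^ 2 + 1) * E * (2 * Real.pi ^ 2 * d ^ 2) - 2 * α * ε) := by nlinarith
    nlinarith [sq_nonneg Real.pi]

lemma distHalfZ_nonneg (t : ℝ) : 0 ≤ distHalfZ t := le_ciInf fun n => abs_nonneg _

/-- for every `α > 0` there is `C > 0` such that for every `ε ∈ (0,1]` and every
`t ∈ ℝ` one has
`f_{1/2}(t) + (4α/π²)·ε·f₁(t) ≥ min{ ½·|exp(2πιt) − 1|² , 2αε } − C·ε^{3/2}·f₁(t)`. -/
theorem stmt6 (α : ℝ) (hα : 0 < α) :
    ∃ C : ℝ, 0 < C ∧ ∀ ε ∈ Set.Ioc (0 : ℝ) 1, ∀ t : ℝ,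
      fHalf t + 4 * α / Real.pi ^ 2 * ε * f1 t ≥
        min (1 / 2 * ‖Complex.exp (2 * Real.pi * Complex.I * (t : ℂ)) - 1‖ ^ 2)
            (2 * α * ε)
          - C * ε ^ ((3 : ℝ) / 2) * f1 t := by
  refine ⟨α ^ 2 + 1, by positivity, ?_⟩
  rintro ε ⟨hε0, hε1⟩ t
  have hε1' : ε ≤ 1 := hε1
  have hd0 : 0 ≤ distZ t := distZ_nonneg t
  have hd2 : distZ t ≤ 1/2 := distZ_le_half t
  have hh0 : 0 ≤ distHalfZ t := distHalfZ_nonneg t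
  have hE0 : 0 ≤ ε ^ ((3:ℝ)/2) := Real.rpow_nonneg hε0.le _
  have hEe : ε ^ 2 ≤ ε ^ ((3:ℝ)/2) := by
    have h2 : ε ^ (2:ℝ) ≤ ε ^ ((3:ℝ)/2) :=
      Real.rpow_le_rpow_of_exponent_ge hε0 hε1 (by norm_num)
    calc ε ^ 2 = ε ^ ((2:ℕ):ℝ) := by rw [Real.rpow_natCast]
      _ ≤ ε ^ ((3:ℝ)/2) := by exact_mod_cast h2
  have hmin := distHalfZ_ge t
  have hM1 : min (1 / 2 * ‖Complex.exp (2 * Real.pi * Complex.I * (t : ℂ)) - 1‖ ^ 2)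
      (2 * α * ε) ≤ 2 * α * ε := min_le_right _ _
  have hM2 : min (1 / 2 * ‖Complex.exp (2 * Real.pi * Complex.I * (t : ℂ)) - 1‖ ^ 2)
      (2 * α * ε) ≤ 2 * Real.pi ^ 2 * distZ t ^ 2 := by
    refine le_trans (min_le_left _ _) ?_
    rw [abs_exp_sq]
    have hsin := sin_le_pi_distZ t
    have h0 := abs_nonneg (Real.sin (Real.pi * t))
    nlinarith [sq_abs (Real.sin (Real.pi * t))]
  have key := auxkey α ε (distZ t) (distHalfZ t) (ε ^ ((3:ℝ)/2))
    (min (1 / 2 * ‖Complex.exp (2 * Real.pi * Complex.I * (t : ℂ)) - 1‖ ^ 2)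
      (2 * α * ε)) hα hε0 hε1' hd0 hd2 hh0 hE0 hEe hmin hM1 hM2
  have hf1 : f1 t = 2 * Real.pi ^ 2 * distZ t ^ 2 := rfl
  have hfH : fHalf t = 2 * Real.pi ^ 2 * distHalfZ t ^ 2 := rfl
  have hcoef : 4 * α / Real.pi ^ 2 * ε * f1 t = 8 * α * ε * distZ t ^ 2 := by
    rw [hf1]
    have hπ : Real.pi ≠ 0 := Real.pi_ne_zero
    field_simp
    ring
  have hC : (α ^ 2 + 1) * ε ^ ((3:ℝ)/2) * f1 t
      = (α ^ 2 + 1) * ε ^ ((3:ℝ)/2) * (2 * Real.pi ^ 2 * distZ t ^ 2) := by rw [hf1]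
  rw [ge_iff_le]
  linarith [key, hcoef, hfH, hC]
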